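/- Let r_1, ..., r_n be positive real numbers (n ≥ 3) such that each value occurs at most 4 times. Then there exist points v_1, ..., v_n in ℝ² with ‖v_i‖ = r_i, such that each v_i is an extreme point of the convex hull of {v_1, ..., v_n} and the origin is in the interior of the convex hull. -/

import Mathlib

open Real
local notation "⟪" x ", " y "⟫" => @inner ℝ _ _ x y

open Real


noncomputable def pt (x y : ℝ) : EuclideanSpace ℝ (Fin 2) := !₂[x, y]

lemma pt_apply0 (x y : ℝ) : pt x y 0 = x := rfl
lemma pt_apply1 (x y : ℝ) : pt x y 1 = y := rfl

lemma pt_norm (x y : ℝ) : ‖pt x y‖ = Real.sqrt (x ^ 2 + y ^ 2) := by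
  rw [EuclideanSpace.norm_eq]
  simp [Fin.sum_univ_two, pt, sq_abs]

lemma pt_inner (x y a b : ℝ) : ⟪pt x y, pt a b⟫ = x * a + y * b := by
  simp [PiLp.inner_apply, Fin.sum_univ_two, RCLike.inner_apply, pt]
  ring

lemma extreme_of_functional {n : ℕ} (v : Fin n → EuclideanSpace ℝ (Fin 2)) (i : Fin n)
    (w : EuclideanSpace ℝ (Fin 2))
    (h : ∀ j, j ≠ i → ⟪v j, w⟫ < ⟪v i, w⟫) :
    v i ∉ convexHull ℝ (v '' {j | j ≠ i}) := by
  intro hmem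
  have hlin : IsLinearMap ℝ (fun x : EuclideanSpace ℝ (Fin 2) => ⟪x, w⟫) :=
    ⟨fun a b => inner_add_left a b w, fun c a => real_inner_smul_left a w c⟩
  have hconv : Convex ℝ {x : EuclideanSpace ℝ (Fin 2) | ⟪x, w⟫ < ⟪v i, w⟫} :=
    convex_halfSpace_lt hlin _
  have hsub0 : v '' {j | j ≠ i} ⊆ {x : EuclideanSpace ℝ (Fin 2) | ⟪x, w⟫ < ⟪v i, w⟫} := by
    rintro x ⟨j, hj, rfl⟩
    exact h j hj
  have hsub := convexHull_min hsub0 hconv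
  have hlt : ⟪v i, w⟫ < ⟪v i, w⟫ := hsub hmem
  exact lt_irrefl _ hlt


lemma cross0 {C : Set (EuclideanSpace ℝ (Fin 2))} (hC : Convex ℝ C)
    {p q : EuclideanSpace ℝ (Fin 2)} (hp : p ∈ C) (hq : q ∈ C)
    (hp0 : 0 < p 0) (hq0 : q 0 < 0) :
    ∃ z ∈ C, z 0 = 0 ∧ ∃ α β : ℝ, 0 < α ∧ 0 < β ∧ z 1 = α * p 1 + β * q 1 := by
  have hd : 0 < p 0 - q 0 := by linarith
  set t : ℝ := (-(q 0)) / (p 0 - q 0) with ht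
  have ht0 : 0 < t := div_pos (by linarith) hd
  have ht1 : t < 1 := by rw [div_lt_one hd]; linarith
  refine ⟨t • p + (1 - t) • q, hC hp hq ht0.le (by linarith) (by ring), ?_, t, 1 - t,
    ht0, by linarith, ?_⟩
  · have : (t • p + (1 - t) • q) 0 = t * p 0 + (1 - t) * q 0 := by
      simp [PiLp.add_apply, PiLp.smul_apply]
    rw [this, ht]
    field_simp
    ring
  · have : (t • p + (1 - t) • q) 1 = t * p 1 + (1 - t) * q 1 := by
      simp [PiLp.add_apply, PiLp.smul_apply]
    rw [this]

lemma cross1 {C : Set (EuclideanSpace ℝ (Fin 2))} (hC : Convex ℝ C)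
    {p q : EuclideanSpace ℝ (Fin 2)} (hp : p ∈ C) (hq : q ∈ C)
    (hp1 : 0 < p 1) (hq1 : q 1 < 0) :
    ∃ z ∈ C, z 1 = 0 ∧ ∃ α β : ℝ, 0 < α ∧ 0 < β ∧ z 0 = α * p 0 + β * q 0 := by
  have hd : 0 < p 1 - q 1 := by linarith
  set t : ℝ := (-(q 1)) / (p 1 - q 1) with ht
  have ht0 : 0 < t := div_pos (by linarith) hd
  have ht1 : t < 1 := by rw [div_lt_one hd]; linarith
  refine ⟨t • p + (1 - t) • q, hC hp hq ht0.le (by linarith) (by ring), ?_, t, 1 - t,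
    ht0, by linarith, ?_⟩
  · have : (t • p + (1 - t) • q) 1 = t * p 1 + (1 - t) * q 1 := by
      simp [PiLp.add_apply, PiLp.smul_apply]
    rw [this, ht]
    field_simp
    ring
  · have : (t • p + (1 - t) • q) 0 = t * p 0 + (1 - t) * q 0 := by
      simp [PiLp.add_apply, PiLp.smul_apply]
    rw [this]


lemma comb_eq (u A B : ℝ) (hA : 0 < A) (hB : B < 0) :
    (max u 0 / A) * A + (max (-u) 0 / (-B)) * B = u := by
  rcases le_total 0 u with h | h
  · rw [max_eq_left h, max_eq_right (by linarith : -u ≤ 0)]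
    field_simp
    simp
  · rw [max_eq_right h, max_eq_left (by linarith : (0:ℝ) ≤ -u), neg_div_neg_eq,
      div_mul_cancel₀ _ (ne_of_lt hB)]
    simp

lemma zero_mem_interior {C : Set (EuclideanSpace ℝ (Fin 2))} (hC : Convex ℝ C)
    {pa pb pc pd : EuclideanSpace ℝ (Fin 2)}
    (hpa : pa ∈ C) (hpb : pb ∈ C) (hpc : pc ∈ C) (hpd : pd ∈ C)
    (ha1 : pa 1 = 0) (ha0 : 0 < pa 0)
    (hb1 : pb 1 = 0) (hb0 : pb 0 < 0)
    (hc0 : pc 0 = 0) (hc1 : 0 < pc 1)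
    (hd0 : pd 0 = 0) (hd1 : pd 1 < 0) :
    (0 : EuclideanSpace ℝ (Fin 2)) ∈ interior C := by
  have hdiff : 0 < pa 0 - pb 0 := by linarith
  set t : ℝ := (-(pb 0)) / (pa 0 - pb 0) with htdef
  have ht0 : 0 < t := div_pos (by linarith) hdiff
  have ht1 : t < 1 := by rw [div_lt_one hdiff]; linarith
  have hzeroC : (0 : EuclideanSpace ℝ (Fin 2)) ∈ C := by
    have hmem := hC hpa hpb ht0.le (by linarith : (0:ℝ) ≤ 1 - t) (by ring)
    have heq : t • pa + (1 - t) • pb = (0 : EuclideanSpace ℝ (Fin 2)) := by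
      ext j
      fin_cases j
      · show t * pa 0 + (1 - t) * pb 0 = 0
        rw [htdef]; field_simp; ring
      · show t * pa 1 + (1 - t) * pb 1 = 0
        rw [ha1, hb1]; ring
    rwa [heq] at hmem
  set ε : ℝ := min (min (pa 0) (-(pb 0))) (min (pc 1) (-(pd 1))) / 2 with hεdef
  have hε : 0 < ε := by
    apply div_pos _ (by norm_num)
    exact lt_min (lt_min ha0 (by linarith)) (lt_min hc1 (by linarith))
  have hεa : ε ≤ pa 0 / 2 := by
    have := le_trans (min_le_left (min (pa 0) (-(pb 0))) (min (pc 1) (-(pd 1)))) (min_le_left _ _)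
    rw [hεdef]; linarith
  have hεb : ε ≤ -(pb 0) / 2 := by
    have := le_trans (min_le_left (min (pa 0) (-(pb 0))) (min (pc 1) (-(pd 1)))) (min_le_right _ _)
    rw [hεdef]; linarith
  have hεc : ε ≤ pc 1 / 2 := by
    have := le_trans (min_le_right (min (pa 0) (-(pb 0))) (min (pc 1) (-(pd 1)))) (min_le_left _ _)
    rw [hεdef]; linarith
  have hεd : ε ≤ -(pd 1) / 2 := by
    have := le_trans (min_le_right (min (pa 0) (-(pb 0))) (min (pc 1) (-(pd 1)))) (min_le_right _ _)
    rw [hεdef]; linarith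
  have hball : Metric.ball (0 : EuclideanSpace ℝ (Fin 2)) ε ⊆ C := by
    intro z hz
    rw [Metric.mem_ball, dist_zero_right] at hz
    have habs : ∀ j : Fin 2, |z j| < ε := by
      intro j
      refine lt_of_le_of_lt ?_ hz
      rw [EuclideanSpace.norm_eq, ← Real.sqrt_sq_eq_abs]
      apply Real.sqrt_le_sqrt
      fin_cases j <;> (rw [Fin.sum_univ_two]; simp [sq_abs]; positivity)
    have habs0 := habs 0
    have habs1 := habs 1
    set α := max (z 0) 0 / pa 0 with hαdef
    set β := max (-(z 0)) 0 / (-(pb 0)) with hβdef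
    set γ := max (z 1) 0 / pc 1 with hγdef
    set δ := max (-(z 1)) 0 / (-(pd 1)) with hδdef
    have hα0 : 0 ≤ α := div_nonneg (le_max_right _ _) ha0.le
    have hβ0 : 0 ≤ β := div_nonneg (le_max_right _ _) (by linarith)
    have hγ0 : 0 ≤ γ := div_nonneg (le_max_right _ _) hc1.le
    have hδ0 : 0 ≤ δ := div_nonneg (le_max_right _ _) (by linarith)
    have hx : α * pa 0 + β * pb 0 = z 0 := comb_eq _ _ _ ha0 hb0
    have hy : γ * pc 1 + δ * pd 1 = z 1 := comb_eq _ _ _ hc1 hd1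
    have hαβ : α + β < 1 / 2 := by
      rcases le_total 0 (z 0) with h | h
      · have hβz : β = 0 := by
          rw [hβdef, max_eq_right (by linarith : -(z 0) ≤ 0), zero_div]
        have : α < 1 / 2 := by
          rw [hαdef, max_eq_left h, div_lt_iff₀ ha0]
          have : z 0 ≤ |z 0| := le_abs_self _
          linarith
        linarith
      · have hαz : α = 0 := by
          rw [hαdef, max_eq_right h, zero_div]
        have : β < 1 / 2 := by
          rw [hβdef, max_eq_left (by linarith : (0:ℝ) ≤ -(z 0)), div_lt_iff₀ (by linarith)]
          have : -(z 0) ≤ |z 0| := neg_le_abs _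
          linarith
        linarith
    have hγδ : γ + δ < 1 / 2 := by
      rcases le_total 0 (z 1) with h | h
      · have hδz : δ = 0 := by
          rw [hδdef, max_eq_right (by linarith : -(z 1) ≤ 0), zero_div]
        have : γ < 1 / 2 := by
          rw [hγdef, max_eq_left h, div_lt_iff₀ hc1]
          have : z 1 ≤ |z 1| := le_abs_self _
          linarith
        linarith
      · have hγz : γ = 0 := by
          rw [hγdef, max_eq_right h, zero_div]
        have : δ < 1 / 2 := by
          rw [hδdef, max_eq_left (by linarith : (0:ℝ) ≤ -(z 1)), div_lt_iff₀ (by linarith)]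
          have : -(z 1) ≤ |z 1| := neg_le_abs _
          linarith
        linarith
    set s : ℝ := α + β + γ + δ with hsdef
    have hs1 : s < 1 := by rw [hsdef]; linarith
    set W : Fin 5 → ℝ := ![α, β, γ, δ, 1 - s] with hWdef
    set P : Fin 5 → EuclideanSpace ℝ (Fin 2) := ![pa, pb, pc, pd, 0] with hPdef
    have hmem : ∑ i, W i • P i ∈ C := by
      apply hC.sum_mem
      · intro i _
        fin_cases i <;> simp [hWdef] <;> linarith
      · rw [Fin.sum_univ_five]
        show α + β + γ + δ + (1 - s) = 1
        rw [hsdef]; ring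
      · intro i _
        fin_cases i <;> simpa [hPdef]
    have heq : ∑ i, W i • P i = z := by
      rw [Fin.sum_univ_five]
      ext j
      fin_cases j
      · show α * pa 0 + β * pb 0 + γ * pc 0 + δ * pd 0 + (1 - s) * 0 = z 0
        rw [hc0, hd0]
        linarith
      · show α * pa 1 + β * pb 1 + γ * pc 1 + δ * pd 1 + (1 - s) * 0 = z 1
        rw [ha1, hb1]
        linarith
    rwa [heq] at hmem
  have hsub : Metric.ball (0 : EuclideanSpace ℝ (Fin 2)) ε ⊆ interior C :=
    interior_maximal hball Metric.isOpen_ball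
  exact hsub (Metric.mem_ball_self hε)

set_option maxHeartbeats 1000000 in
lemma case3 (r : Fin 3 → ℝ) (hpos : ∀ i, 0 < r i) :
    ∃ v : Fin 3 → EuclideanSpace ℝ (Fin 2),
      (∀ i, ‖v i‖ = r i) ∧
      (∀ i, v i ∉ convexHull ℝ (v '' {j | j ≠ i})) ∧
      (0 : EuclideanSpace ℝ (Fin 2)) ∈ interior (convexHull ℝ (Set.range v)) := by
  have h3 : Real.sqrt 3 ^ 2 = 3 := Real.sq_sqrt (by norm_num)
  have h3pos : 0 < Real.sqrt 3 := Real.sqrt_pos.2 (by norm_num)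
  have h0 := hpos 0
  have h1 := hpos 1
  have h2 := hpos 2
  set v : Fin 3 → EuclideanSpace ℝ (Fin 2) :=
    ![pt (r 0) 0, pt (-(r 1)/2) (r 1 * Real.sqrt 3/2), pt (-(r 2)/2) (-(r 2 * Real.sqrt 3/2))]
    with hvdef
  have hv0 : v 0 = pt (r 0) 0 := rfl
  have hv1 : v 1 = pt (-(r 1)/2) (r 1 * Real.sqrt 3/2) := rfl
  have hv2 : v 2 = pt (-(r 2)/2) (-(r 2 * Real.sqrt 3/2)) := rfl
  refine ⟨v, ?_, ?_, ?_⟩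
  · intro i
    fin_cases i
    · show ‖v 0‖ = r 0
      rw [hv0, pt_norm]
      have : r 0 ^ 2 + 0 ^ 2 = r 0 ^ 2 := by ring
      rw [this, Real.sqrt_sq h0.le]
    · show ‖v 1‖ = r 1
      rw [hv1, pt_norm]
      have : (-(r 1)/2) ^ 2 + (r 1 * Real.sqrt 3/2) ^ 2 = r 1 ^ 2 := by nlinarith [h3]
      rw [this, Real.sqrt_sq h1.le]
    · show ‖v 2‖ = r 2
      rw [hv2, pt_norm]
      have : (-(r 2)/2) ^ 2 + (-(r 2 * Real.sqrt 3/2)) ^ 2 = r 2 ^ 2 := by nlinarith [h3]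
      rw [this, Real.sqrt_sq h2.le]
  · intro i
    apply extreme_of_functional v i (v i)
    intro j hj
    have W := pt_inner
    fin_cases i <;> fin_cases j
    · exact absurd rfl hj
    · show ⟪pt (-(r 1)/2) (r 1 * Real.sqrt 3/2), pt (r 0) 0⟫ < ⟪pt (r 0) 0, pt (r 0) 0⟫
      rw [pt_inner, pt_inner]
      nlinarith [mul_pos h0 h1]
    · show ⟪pt (-(r 2)/2) (-(r 2 * Real.sqrt 3/2)), pt (r 0) 0⟫ < ⟪pt (r 0) 0, pt (r 0) 0⟫
      rw [pt_inner, pt_inner]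
      nlinarith [mul_pos h0 h2]
    · show ⟪pt (r 0) 0, pt (-(r 1)/2) (r 1 * Real.sqrt 3/2)⟫ <
        ⟪pt (-(r 1)/2) (r 1 * Real.sqrt 3/2), pt (-(r 1)/2) (r 1 * Real.sqrt 3/2)⟫
      rw [pt_inner, pt_inner]
      nlinarith [mul_pos h0 h1, h3, sq_nonneg (r 1)]
    · exact absurd rfl hj
    · show ⟪pt (-(r 2)/2) (-(r 2 * Real.sqrt 3/2)), pt (-(r 1)/2) (r 1 * Real.sqrt 3/2)⟫ <
        ⟪pt (-(r 1)/2) (r 1 * Real.sqrt 3/2), pt (-(r 1)/2) (r 1 * Real.sqrt 3/2)⟫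
      rw [pt_inner, pt_inner]
      nlinarith [mul_pos h1 h2, h3, sq_nonneg (r 1)]
    · show ⟪pt (r 0) 0, pt (-(r 2)/2) (-(r 2 * Real.sqrt 3/2))⟫ <
        ⟪pt (-(r 2)/2) (-(r 2 * Real.sqrt 3/2)), pt (-(r 2)/2) (-(r 2 * Real.sqrt 3/2))⟫
      rw [pt_inner, pt_inner]
      nlinarith [mul_pos h0 h2, h3, sq_nonneg (r 2)]
    · show ⟪pt (-(r 1)/2) (r 1 * Real.sqrt 3/2), pt (-(r 2)/2) (-(r 2 * Real.sqrt 3/2))⟫ <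
        ⟪pt (-(r 2)/2) (-(r 2 * Real.sqrt 3/2)), pt (-(r 2)/2) (-(r 2 * Real.sqrt 3/2))⟫
      rw [pt_inner, pt_inner]
      nlinarith [mul_pos h1 h2, h3, sq_nonneg (r 2)]
    · exact absurd rfl hj
  · have hCconv : Convex ℝ (convexHull ℝ (Set.range v)) := convex_convexHull ℝ _
    have hvC : ∀ i, v i ∈ convexHull ℝ (Set.range v) :=
      fun i => subset_convexHull ℝ _ ⟨i, rfl⟩
    obtain ⟨zb, hzbC, hzb1, α, β, hα, hβ, hzb0⟩ :=
      cross1 hCconv (hvC 1) (hvC 2)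
        (by rw [hv1, pt_apply1]; positivity)
        (by rw [hv2, pt_apply1]; linarith [mul_pos h2 h3pos])
    obtain ⟨zc, hzcC, hzc0, α2, β2, hα2, hβ2, hzc1⟩ :=
      cross0 hCconv (hvC 0) (hvC 1)
        (by rw [hv0, pt_apply0]; exact h0)
        (by rw [hv1, pt_apply0]; linarith)
    obtain ⟨zd, hzdC, hzd0, α3, β3, hα3, hβ3, hzd1⟩ :=
      cross0 hCconv (hvC 0) (hvC 2)
        (by rw [hv0, pt_apply0]; exact h0)
        (by rw [hv2, pt_apply0]; linarith)
    apply zero_mem_interior hCconv (hvC 0) hzbC hzcC hzdC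
    · rw [hv0, pt_apply1]
    · rw [hv0, pt_apply0]; exact h0
    · exact hzb1
    · rw [hzb0, hv1, hv2, pt_apply0, pt_apply0]
      nlinarith
    · exact hzc0
    · rw [hzc1, hv0, hv1, pt_apply1, pt_apply1]
      nlinarith [mul_pos (mul_pos hβ2 h1) h3pos]
    · exact hzd0
    · rw [hzd1, hv0, hv2, pt_apply1, pt_apply1]
      nlinarith [mul_pos (mul_pos hβ3 h2) h3pos]

lemma pos_sq_inj {x y : ℝ} (hx : 0 < x) (hy : 0 < y) (h : x ^ 2 = y ^ 2) : x = y := by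
  rcases lt_trichotomy x y with h' | h' | h'
  · nlinarith
  · exact h'
  · nlinarith

lemma inner_lt_one {u1 u2 w1 w2 : ℝ} (hu : u1 ^ 2 + u2 ^ 2 = 1) (hw : w1 ^ 2 + w2 ^ 2 = 1)
    (hne : u1 ≠ w1 ∨ u2 ≠ w2) : u1 * w1 + u2 * w2 < 1 := by
  have hpos2 : 0 < (u1 - w1) ^ 2 + (u2 - w2) ^ 2 := by
    rcases hne with h | h
    · have h' : 0 < (u1 - w1) ^ 2 := by
        have := sub_ne_zero.mpr h
        positivity
      nlinarith [sq_nonneg (u2 - w2)]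
    · have h' : 0 < (u2 - w2) ^ 2 := by
        have := sub_ne_zero.mpr h
        positivity
      nlinarith [sq_nonneg (u1 - w1)]
  nlinarith

lemma sign_inj (x y : ℕ) (hx : x < 4) (hy : y < 4)
    (h1 : (if x = 0 ∨ x = 3 then (1:ℝ) else -1) = if y = 0 ∨ y = 3 then 1 else -1)
    (h2 : (if x = 0 ∨ x = 1 then (1:ℝ) else -1) = if y = 0 ∨ y = 1 then 1 else -1) : x = y := by
  interval_cases x <;> interval_cases y <;> revert h1 h2 <;> norm_num

lemma interior_of_quadrants {n : ℕ} (v : Fin n → EuclideanSpace ℝ (Fin 2))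
    (i0 i1 i2 i3 : Fin n)
    (h00 : 0 < v i0 0) (h01 : 0 < v i0 1)
    (h10 : v i1 0 < 0) (h11 : 0 < v i1 1)
    (h20 : v i2 0 < 0) (h21 : v i2 1 < 0)
    (h30 : 0 < v i3 0) (h31 : v i3 1 < 0) :
    (0 : EuclideanSpace ℝ (Fin 2)) ∈ interior (convexHull ℝ (Set.range v)) := by
  have hCconv : Convex ℝ (convexHull ℝ (Set.range v)) := convex_convexHull ℝ _
  have hvC : ∀ i, v i ∈ convexHull ℝ (Set.range v) :=
    fun i => subset_convexHull ℝ _ ⟨i, rfl⟩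
  obtain ⟨za, hzaC, hza1, α, β, hα, hβ, hza0⟩ := cross1 hCconv (hvC i0) (hvC i3) h01 h31
  obtain ⟨zb, hzbC, hzb1, α1, β1, hα1, hβ1, hzb0⟩ := cross1 hCconv (hvC i1) (hvC i2) h11 h21
  obtain ⟨zc, hzcC, hzc0, α2, β2, hα2, hβ2, hzc1⟩ := cross0 hCconv (hvC i0) (hvC i1) h00 h10
  obtain ⟨zd, hzdC, hzd0, α3, β3, hα3, hβ3, hzd1⟩ := cross0 hCconv (hvC i3) (hvC i2) h30 h20
  apply zero_mem_interior hCconv hzaC hzbC hzcC hzdC hza1 _ hzb1 _ hzc0 _ hzd0 _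
  · rw [hza0]
    linarith [mul_pos hα h00, mul_pos hβ h30]
  · rw [hzb0]
    linarith [mul_pos hα1 (neg_pos.mpr h10), mul_pos hβ1 (neg_pos.mpr h20)]
  · rw [hzc1]
    linarith [mul_pos hα2 h01, mul_pos hβ2 h11]
  · rw [hzd1]
    linarith [mul_pos hα3 (neg_pos.mpr h31), mul_pos hβ3 (neg_pos.mpr h21)]

set_option maxHeartbeats 2000000 in
lemma case4 (n : ℕ) (hn : 4 ≤ n) (r : Fin n → ℝ)
    (hpos : ∀ i, 0 < r i) (hmult : ∀ c : ℝ, {i : Fin n | r i = c}.ncard ≤ 4) :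
    ∃ v : Fin n → EuclideanSpace ℝ (Fin 2),
      (∀ i, ‖v i‖ = r i) ∧
      (∀ i, v i ∉ convexHull ℝ (v '' {j | j ≠ i})) ∧
      (0 : EuclideanSpace ℝ (Fin 2)) ∈ interior (convexHull ℝ (Set.range v)) := by
  classical
  haveI : Nonempty (Fin n) := ⟨⟨0, by omega⟩⟩
  set m := Finset.univ.inf' Finset.univ_nonempty r with hm
  set M := Finset.univ.sup' Finset.univ_nonempty r with hM
  have hmle : ∀ i, m ≤ r i := fun i => Finset.inf'_le r (Finset.mem_univ i)
  have hMle : ∀ i, r i ≤ M := fun i => Finset.le_sup' r (Finset.mem_univ i)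
  have hm0 : 0 < m := by
    obtain ⟨i, _, hi⟩ := Finset.exists_mem_eq_inf' Finset.univ_nonempty r
    rw [hm, hi]; exact hpos i
  set b := m / 2 with hbdef
  set a := M + 1 with hadef
  have hb0 : 0 < b := by rw [hbdef]; linarith
  have hbr : ∀ i, b < r i := fun i => lt_of_lt_of_le (by rw [hbdef]; linarith) (hmle i)
  have hra : ∀ i, r i < a := fun i => lt_of_le_of_lt (hMle i) (by rw [hadef]; linarith)
  have ha0 : 0 < a := lt_trans (hpos ⟨0, by omega⟩) (hra ⟨0, by omega⟩)
  have hba : b < a := lt_trans (hbr ⟨0, by omega⟩) (hra ⟨0, by omega⟩)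
  set D := a ^ 2 - b ^ 2 with hD
  have hD0 : 0 < D := by rw [hD]; nlinarith
  set X : Fin n → ℝ := fun i => a * Real.sqrt ((r i ^ 2 - b ^ 2) / D) with hX
  set Y : Fin n → ℝ := fun i => b * Real.sqrt ((a ^ 2 - r i ^ 2) / D) with hY
  have hXarg : ∀ i, 0 < (r i ^ 2 - b ^ 2) / D :=
    fun i => div_pos (by nlinarith [hbr i, hpos i, hb0]) hD0
  have hYarg : ∀ i, 0 < (a ^ 2 - r i ^ 2) / D :=
    fun i => div_pos (by nlinarith [hra i, hpos i]) hD0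
  have hXpos : ∀ i, 0 < X i := fun i => mul_pos ha0 (Real.sqrt_pos.2 (hXarg i))
  have hYpos : ∀ i, 0 < Y i := fun i => mul_pos hb0 (Real.sqrt_pos.2 (hYarg i))
  have hX2 : ∀ i, X i ^ 2 = a ^ 2 * ((r i ^ 2 - b ^ 2) / D) := by
    intro i
    rw [hX, mul_pow, Real.sq_sqrt (hXarg i).le]
  have hY2 : ∀ i, Y i ^ 2 = b ^ 2 * ((a ^ 2 - r i ^ 2) / D) := by
    intro i
    rw [hY, mul_pow, Real.sq_sqrt (hYarg i).le]
  have hsum : ∀ i, X i ^ 2 + Y i ^ 2 = r i ^ 2 := by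
    intro i
    rw [hX2 i, hY2 i]
    have hDne : D ≠ 0 := ne_of_gt hD0
    field_simp
    rw [hD]
    ring
  have hell : ∀ i, X i ^ 2 / a ^ 2 + Y i ^ 2 / b ^ 2 = 1 := by
    intro i
    rw [hX2 i, hY2 i]
    have hDne : D ≠ 0 := ne_of_gt hD0
    have hane : a ≠ 0 := ne_of_gt ha0
    have hbne : b ≠ 0 := ne_of_gt hb0
    field_simp
    rw [hD]
    ring
  have hXinj : ∀ i j, X i = X j → r i = r j := by
    intro i j h
    have h2 : X i ^ 2 = X j ^ 2 := by rw [h]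
    rw [hX2 i, hX2 j] at h2
    have ha2 : (0:ℝ) < a ^ 2 := by positivity
    have h3 : (r i ^ 2 - b ^ 2) / D = (r j ^ 2 - b ^ 2) / D := mul_left_cancel₀ (ne_of_gt ha2) h2
    have h4 : r i ^ 2 = r j ^ 2 := by
      field_simp at h3
      linarith
    exact pos_sq_inj (hpos i) (hpos j) h4
  -- rank machinery
  set rnk : Fin n → ℕ :=
    fun i => (Finset.univ.filter (fun j => r j < r i ∨ (r j = r i ∧ j < i))).card with hrnk
  set wcl : Fin n → ℕ := fun i => (Finset.univ.filter (fun j => r j = r i ∧ j < i)).card with hwcl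
  set bse : Fin n → ℕ := fun i => (Finset.univ.filter (fun j => r j < r i)).card with hbse
  have hsplit : ∀ i, rnk i = bse i + wcl i := by
    intro i
    rw [hrnk, hbse, hwcl]
    simp only
    rw [Finset.filter_or, Finset.card_union_of_disjoint]
    rw [Finset.disjoint_left]
    intro k hk1 hk2
    simp only [Finset.mem_filter] at hk1 hk2
    exact absurd hk2.2.1 (ne_of_lt hk1.2)
  have hwlt : ∀ i, wcl i < 4 := by
    intro i
    have hsub : Finset.univ.filter (fun j => r j = r i ∧ j < i) ⊂
        Finset.univ.filter (fun j => r j = r i) := by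
      rw [Finset.ssubset_iff_of_subset
        (Finset.monotone_filter_right _ (fun k _ hk => hk.1))]
      exact ⟨i, by simp, by simp⟩
    have hlt := Finset.card_lt_card hsub
    have hcard : (Finset.univ.filter (fun j => r j = r i)).card ≤ 4 := by
      have h := hmult (r i)
      have heq : {j : Fin n | r j = r i} = ↑(Finset.univ.filter (fun j => r j = r i)) := by
        ext k; simp
      rwa [heq, Set.ncard_coe_finset] at h
    simp only [hwcl]
    omega
  have hwinj : ∀ i j, i < j → r i = r j → wcl i < wcl j := by
    intro i j hij hr
    have hnotmem : i ∉ Finset.univ.filter (fun k => r k = r i ∧ k < i) := by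
      simp
    have hsub : insert i (Finset.univ.filter (fun k => r k = r i ∧ k < i)) ⊆
        Finset.univ.filter (fun k => r k = r j ∧ k < j) := by
      intro k hk
      rw [Finset.mem_insert] at hk
      simp only [Finset.mem_filter, Finset.mem_univ, true_and]
      rcases hk with rfl | hk
      · exact ⟨hr, hij⟩
      · simp only [Finset.mem_filter, Finset.mem_univ, true_and] at hk
        exact ⟨hk.1.trans hr, hk.2.trans hij⟩
    have hcard := Finset.card_le_card hsub
    rw [Finset.card_insert_of_notMem hnotmem] at hcard
    rw [hwcl]
    simp only
    omega
  have hrmono : ∀ i j, (r i < r j ∨ (r i = r j ∧ i < j)) → rnk i < rnk j := by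
    intro i j hij
    have hnotmem : i ∉ Finset.univ.filter (fun k => r k < r i ∨ (r k = r i ∧ k < i)) := by
      simp
    have hsub : insert i (Finset.univ.filter (fun k => r k < r i ∨ (r k = r i ∧ k < i))) ⊆
        Finset.univ.filter (fun k => r k < r j ∨ (r k = r j ∧ k < j)) := by
      intro k hk
      rw [Finset.mem_insert] at hk
      simp only [Finset.mem_filter, Finset.mem_univ, true_and]
      rcases hk with rfl | hk
      · exact hij
      · simp only [Finset.mem_filter, Finset.mem_univ, true_and] at hk
        rcases hij with h1 | ⟨h1, h2⟩ <;> rcases hk with h3 | ⟨h3, h4⟩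
        · exact Or.inl (h3.trans h1)
        · exact Or.inl (h3 ▸ h1)
        · exact Or.inl (by rw [← h1]; exact h3)
        · exact Or.inr ⟨h3.trans h1, h4.trans h2⟩
    have hcard := Finset.card_le_card hsub
    rw [Finset.card_insert_of_notMem hnotmem] at hcard
    rw [hrnk]
    simp only
    omega
  have hrlt : ∀ i, rnk i < n := by
    intro i
    have hsub : Finset.univ.filter (fun k => r k < r i ∨ (r k = r i ∧ k < i)) ⊆
        Finset.univ.erase i := by
      intro k hk
      simp only [Finset.mem_filter, Finset.mem_univ, true_and] at hk
      rw [Finset.mem_erase]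
      refine ⟨?_, Finset.mem_univ k⟩
      rintro rfl
      rcases hk with h | ⟨_, h⟩
      · exact absurd h (lt_irrefl _)
      · exact absurd h (lt_irrefl _)
    have hcard := Finset.card_le_card hsub
    rw [Finset.card_erase_of_mem (Finset.mem_univ i), Finset.card_univ, Fintype.card_fin] at hcard
    simp only [hrnk]
    omega
  have hRsurj : ∀ t : ℕ, t < n → ∃ i, rnk i = t := by
    set R : Fin n → Fin n := fun i => ⟨rnk i, hrlt i⟩ with hR
    have hRinj : Function.Injective R := by
      intro i j hij
      have heq : rnk i = rnk j := congrArg Fin.val hij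
      by_contra hne
      rcases lt_trichotomy (r i) (r j) with h | h | h
      · exact absurd heq (ne_of_lt (hrmono i j (Or.inl h)))
      · rcases lt_or_gt_of_ne hne with h' | h'
        · exact absurd heq (ne_of_lt (hrmono i j (Or.inr ⟨h, h'⟩)))
        · exact absurd heq.symm (ne_of_lt (hrmono j i (Or.inr ⟨h.symm, h'⟩)))
      · exact absurd heq.symm (ne_of_lt (hrmono j i (Or.inl h)))
    intro t ht
    obtain ⟨i, hi⟩ := Finite.surjective_of_injective hRinj ⟨t, ht⟩
    exact ⟨i, congrArg Fin.val hi⟩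
  -- signs
  set q : Fin n → ℕ := fun i => rnk i % 4 with hq
  have hqlt : ∀ i, q i < 4 := fun i => by simp only [hq]; omega
  set sx : Fin n → ℝ := fun i => if q i = 0 ∨ q i = 3 then 1 else -1 with hsx
  set sy : Fin n → ℝ := fun i => if q i = 0 ∨ q i = 1 then 1 else -1 with hsy
  have hsx2 : ∀ i, sx i ^ 2 = 1 := by
    intro i; simp only [hsx]; split_ifs <;> norm_num
  have hsy2 : ∀ i, sy i ^ 2 = 1 := by
    intro i; simp only [hsy]; split_ifs <;> norm_num
  have hqeq : ∀ i j, sx i = sx j → sy i = sy j → q i = q j := by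
    intro i j h1 h2
    simp only [hsx] at h1
    simp only [hsy] at h2
    exact sign_inj (q i) (q j) (hqlt i) (hqlt j) h1 h2
  have hqne : ∀ i j, i ≠ j → r i = r j → q i ≠ q j := by
    intro i j hij hr hq'
    have hbeq : bse i = bse j := by
      simp only [hbse]
      congr 1
      apply Finset.filter_congr
      intro k _
      rw [hr]
    have hw : wcl i ≠ wcl j := by
      rcases lt_or_gt_of_ne hij with h | h
      · exact ne_of_lt (hwinj i j h hr)
      · exact (ne_of_lt (hwinj j i h hr.symm)).symm
    simp only [hq] at hq'
    rw [hsplit i, hsplit j, hbeq] at hq'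
    have hwi := hwlt i
    have hwj := hwlt j
    omega
  set v : Fin n → EuclideanSpace ℝ (Fin 2) := fun i => pt (sx i * X i) (sy i * Y i) with hv
  have hv0c : ∀ i, v i 0 = sx i * X i := fun i => pt_apply0 _ _
  have hv1c : ∀ i, v i 1 = sy i * Y i := fun i => pt_apply1 _ _
  have hane : a ≠ 0 := ne_of_gt ha0
  have hbne : b ≠ 0 := ne_of_gt hb0
  refine ⟨v, ?_, ?_, ?_⟩
  · intro i
    show ‖pt (sx i * X i) (sy i * Y i)‖ = r i
    rw [pt_norm]
    have he : (sx i * X i) ^ 2 + (sy i * Y i) ^ 2 = r i ^ 2 := by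
      linear_combination X i ^ 2 * hsx2 i + Y i ^ 2 * hsy2 i + hsum i
    rw [he, Real.sqrt_sq (hpos i).le]
  · intro i
    apply extreme_of_functional v i (pt (sx i * X i / a ^ 2) (sy i * Y i / b ^ 2))
    intro j hj
    show ⟪pt (sx j * X j) (sy j * Y j), pt (sx i * X i / a ^ 2) (sy i * Y i / b ^ 2)⟫ <
      ⟪pt (sx i * X i) (sy i * Y i), pt (sx i * X i / a ^ 2) (sy i * Y i / b ^ 2)⟫
    rw [pt_inner, pt_inner]
    set u1 := sx i * X i / a with hu1
    set u2 := sy i * Y i / b with hu2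
    set w1 := sx j * X j / a with hw1
    set w2 := sy j * Y j / b with hw2
    have hu : u1 ^ 2 + u2 ^ 2 = 1 := by
      have e1 : u1 ^ 2 = X i ^ 2 / a ^ 2 := by
        rw [hu1, div_pow, mul_pow, hsx2 i, one_mul]
      have e2 : u2 ^ 2 = Y i ^ 2 / b ^ 2 := by
        rw [hu2, div_pow, mul_pow, hsy2 i, one_mul]
      rw [e1, e2]; exact hell i
    have hwsum : w1 ^ 2 + w2 ^ 2 = 1 := by
      have e1 : w1 ^ 2 = X j ^ 2 / a ^ 2 := by
        rw [hw1, div_pow, mul_pow, hsx2 j, one_mul]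
      have e2 : w2 ^ 2 = Y j ^ 2 / b ^ 2 := by
        rw [hw2, div_pow, mul_pow, hsy2 j, one_mul]
      rw [e1, e2]; exact hell j
    have hLHS : sx j * X j * (sx i * X i / a ^ 2) + sy j * Y j * (sy i * Y i / b ^ 2)
        = u1 * w1 + u2 * w2 := by
      rw [hu1, hu2, hw1, hw2]
      field_simp
    have hRHS : sx i * X i * (sx i * X i / a ^ 2) + sy i * Y i * (sy i * Y i / b ^ 2) = 1 := by
      have : sx i * X i * (sx i * X i / a ^ 2) + sy i * Y i * (sy i * Y i / b ^ 2)
          = u1 ^ 2 + u2 ^ 2 := by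
        rw [hu1, hu2]
        field_simp
      rw [this, hu]
    rw [hLHS, hRHS]
    apply inner_lt_one hu hwsum
    have hdiff : u1 ≠ w1 ∨ u2 ≠ w2 := by
      by_contra hcon
      push_neg at hcon
      obtain ⟨h1, h2⟩ := hcon
      rw [hu1, hw1] at h1
      rw [hu2, hw2] at h2
      have hXX : sx i * X i = sx j * X j := (div_left_inj' hane).mp h1
      have hYY : sy i * Y i = sy j * Y j := (div_left_inj' hbne).mp h2
      have hX2eq : X i ^ 2 = X j ^ 2 := by
        have h3 := congrArg (fun t => t ^ 2) hXX
        simp only [mul_pow] at h3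
        rw [hsx2 i, hsx2 j, one_mul, one_mul] at h3
        exact h3
      have hXeq : X i = X j := pos_sq_inj (hXpos i) (hXpos j) hX2eq
      have hY2eq : Y i ^ 2 = Y j ^ 2 := by
        have h3 := congrArg (fun t => t ^ 2) hYY
        simp only [mul_pow] at h3
        rw [hsy2 i, hsy2 j, one_mul, one_mul] at h3
        exact h3
      have hYeq : Y i = Y j := pos_sq_inj (hYpos i) (hYpos j) hY2eq
      have hreq : r i = r j := hXinj i j hXeq
      have hsxeq : sx i = sx j := by
        rw [hXeq] at hXX
        exact mul_right_cancel₀ (ne_of_gt (hXpos j)) hXX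
      have hsyeq : sy i = sy j := by
        rw [hYeq] at hYY
        exact mul_right_cancel₀ (ne_of_gt (hYpos j)) hYY
      exact hqne i j (fun e => hj e.symm) hreq (hqeq i j hsxeq hsyeq)
    exact hdiff
  · obtain ⟨i0, hr0⟩ := hRsurj 0 (by omega)
    obtain ⟨i1, hr1⟩ := hRsurj 1 (by omega)
    obtain ⟨i2, hr2⟩ := hRsurj 2 (by omega)
    obtain ⟨i3, hr3⟩ := hRsurj 3 (by omega)
    have hq0 : q i0 = 0 := by simp only [hq, hr0]
    have hq1 : q i1 = 1 := by simp only [hq, hr1]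
    have hq2 : q i2 = 2 := by simp only [hq, hr2]
    have hq3 : q i3 = 3 := by simp only [hq, hr3]
    have hsx0 : sx i0 = 1 := by simp [hsx, hq0]
    have hsy0 : sy i0 = 1 := by simp [hsy, hq0]
    have hsx1 : sx i1 = -1 := by simp [hsx, hq1]
    have hsy1 : sy i1 = 1 := by simp [hsy, hq1]
    have hsx2' : sx i2 = -1 := by simp [hsx, hq2]
    have hsy2' : sy i2 = -1 := by simp [hsy, hq2]
    have hsx3 : sx i3 = 1 := by simp [hsx, hq3]
    have hsy3 : sy i3 = -1 := by simp [hsy, hq3]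
    apply interior_of_quadrants v i0 i1 i2 i3
    · rw [hv0c, hsx0, one_mul]; exact hXpos i0
    · rw [hv1c, hsy0, one_mul]; exact hYpos i0
    · rw [hv0c, hsx1]; linarith [hXpos i1]
    · rw [hv1c, hsy1, one_mul]; exact hYpos i1
    · rw [hv0c, hsx2']; linarith [hXpos i2]
    · rw [hv1c, hsy2']; linarith [hYpos i2]
    · rw [hv0c, hsx3, one_mul]; exact hXpos i3
    · rw [hv1c, hsy3]; linarith [hYpos i3]


theorem stmt6 (n : ℕ) (hn : 3 ≤ n) (r : Fin n → ℝ)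
    (hpos : ∀ i, 0 < r i) (hmult : ∀ c : ℝ, {i : Fin n | r i = c}.ncard ≤ 4) :
    ∃ v : Fin n → EuclideanSpace ℝ (Fin 2),
      (∀ i, ‖v i‖ = r i) ∧
      (∀ i, v i ∉ convexHull ℝ (v '' {j | j ≠ i})) ∧
      (0 : EuclideanSpace ℝ (Fin 2)) ∈ interior (convexHull ℝ (Set.range v)) := by
  rcases Nat.lt_or_ge n 4 with h4 | h4
  · have h3 : n = 3 := by omega
    subst h3
    exact case3 r hpos
  · exact case4 n h4 r hpos hmult
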